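/- Let c1 > 0 and c2 > 0 and consider the two-player game Γ_2^c in which player 1 has actions {a1,a2,a3}, player 2 has actions {b1,b2,b3}, and payoffs (u_1,u_2) are: (a1,b1)↦(1,1), (a1,b2)↦(0,0), (a1,b3)↦(−7−c1,−7−c2), (a2,b1)↦(0,0), (a2,b2)↦(0,0), (a2,b3)↦(−7,−7), (a3,b1)↦(−7−c1,−7−c2), (a3,b2)↦(−7,−7), (a3,b3)↦(−7,−7). Then the set of proper equilibria of Γ_2^c equals {(a1,b1)}. -/

import Mathlib

open Filter Topology

section GameDefs

variable {N : Type} [Fintype N] [DecidableEq N] {A : N → Type}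
  [∀ i, Fintype (A i)] [∀ i, DecidableEq (A i)]

/-- A mixed-strategy profile: each `σ i` is a probability distribution on `A i`. -/
def IsStrategy (σ : ∀ i, A i → ℝ) : Prop :=
  (∀ i a, 0 ≤ σ i a) ∧ ∀ i, ∑ a, σ i a = 1

/-- An interior profile places positive probability on every action. -/
def Interior (σ : ∀ i, A i → ℝ) : Prop :=
  ∀ i a, 0 < σ i a

/-- Expected utility of player `i` at profile `σ`. -/
noncomputable def expUtil (u : ∀ i : N, (∀ j, A j) → ℝ) (σ : ∀ i, A i → ℝ) (i : N) : ℝ :=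
  ∑ a : ∀ j, A j, u i a * ∏ j, σ j (a j)

/-- Expected utility of player `i` from playing action `ai` against `σ₋ᵢ`. -/
noncomputable def devUtil (u : ∀ i : N, (∀ j, A j) → ℝ) (σ : ∀ i, A i → ℝ)
    (i : N) (ai : A i) : ℝ :=
  expUtil u (Function.update σ i (fun b => if b = ai then (1 : ℝ) else 0)) i

/-- Nash equilibrium. -/
def IsNash (u : ∀ i : N, (∀ j, A j) → ℝ) (σ : ∀ i, A i → ℝ) : Prop :=
  IsStrategy σ ∧ ∀ (i : N) (μ : A i → ℝ), (∀ a, 0 ≤ μ a) → (∑ a, μ a = 1) →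
    expUtil u (Function.update σ i μ) i ≤ expUtil u σ i

/-- Weak payoff monotonicity: differences in behavior reveal differences in payoffs. -/
def WeaklyPayoffMonotone (u : ∀ i : N, (∀ j, A j) → ℝ) (σ : ∀ i, A i → ℝ) : Prop :=
  IsStrategy σ ∧ ∀ (i : N) (ai bi : A i), σ i bi < σ i ai →
    devUtil u σ i bi < devUtil u σ i ai

/-- Payoff monotonicity. -/
def PayoffMonotone (u : ∀ i : N, (∀ j, A j) → ℝ) (σ : ∀ i, A i → ℝ) : Prop :=
  IsStrategy σ ∧ ∀ (i : N) (ai bi : A i),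
    σ i bi ≤ σ i ai ↔ devUtil u σ i bi ≤ devUtil u σ i ai

/-- Pointwise convergence of a sequence of profiles. -/
def ConvergesTo (s : ℕ → ∀ i, A i → ℝ) (σ : ∀ i, A i → ℝ) : Prop :=
  ∀ (i : N) (ai : A i), Tendsto (fun n => s n i ai) atTop (𝓝 (σ i ai))

/-- Empirical equilibrium: a Nash equilibrium that is the limit of weakly payoff
monotone profiles. -/
def IsEmpirical (u : ∀ i : N, (∀ j, A j) → ℝ) (σ : ∀ i, A i → ℝ) : Prop :=
  IsNash u σ ∧ ∃ s : ℕ → ∀ i, A i → ℝ,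
    (∀ n, WeaklyPayoffMonotone u (s n)) ∧ ConvergesTo s σ

/-- Proper equilibrium (Myerson). -/
def IsProper (u : ∀ i : N, (∀ j, A j) → ℝ) (σ : ∀ i, A i → ℝ) : Prop :=
  IsStrategy σ ∧ ∃ s : ℕ → ∀ i, A i → ℝ,
    (∀ n, IsStrategy (s n) ∧ Interior (s n) ∧
      ∀ (i : N) (ai bi : A i),
        devUtil u (s n) i bi < devUtil u (s n) i ai →
          s n i bi ≤ (1 / (n + 1) : ℝ) * s n i ai) ∧
    ConvergesTo s σ

/-- Perfect equilibrium (Selten, in Myerson's formulation). -/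
def IsPerfect (u : ∀ i : N, (∀ j, A j) → ℝ) (σ : ∀ i, A i → ℝ) : Prop :=
  IsStrategy σ ∧ ∃ s : ℕ → ∀ i, A i → ℝ,
    (∀ n, IsStrategy (s n) ∧ Interior (s n) ∧
      ∀ (i : N) (ai : A i), (1 / (n + 1) : ℝ) < s n i ai →
        ∀ bi : A i, devUtil u (s n) i bi ≤ devUtil u (s n) i ai) ∧
    ConvergesTo s σ

/-- `bi` weakly dominates `ai` for player `i`. -/
def WeaklyDominates (u : ∀ i : N, (∀ j, A j) → ℝ) (i : N) (bi ai : A i) : Prop :=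
  (∀ a : ∀ j, A j, u i (Function.update a i ai) ≤ u i (Function.update a i bi)) ∧
  ∃ a : ∀ j, A j, u i (Function.update a i ai) < u i (Function.update a i bi)

/-- Undominated Nash equilibrium. -/
def IsUndominatedNash (u : ∀ i : N, (∀ j, A j) → ℝ) (σ : ∀ i, A i → ℝ) : Prop :=
  IsNash u σ ∧ ∀ (i : N) (ai : A i), 0 < σ i ai →
    ¬ ∃ bi : A i, WeaklyDominates u i bi ai

end GameDefs

/-- A regular quantal response function on a finite set of actions `B`:
interiority, continuity, responsiveness, and monotonicity. -/
def IsRegularQRF {B : Type} [Fintype B] [DecidableEq B]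
    (p : (B → ℝ) → (B → ℝ)) : Prop :=
  (∀ x, (∀ a, 0 < p x a) ∧ ∑ a, p x a = 1) ∧
  Continuous p ∧
  (∀ (x : B → ℝ) (η : ℝ) (a : B), 0 < η →
    p x a < p (Function.update x a (x a + η)) a) ∧
  ∀ (x : B → ℝ) (a b : B), x b < x a → p x b < p x a

section QREDefs

variable {N : Type} [Fintype N] [DecidableEq N] {A : N → Type}
  [∀ i, Fintype (A i)] [∀ i, DecidableEq (A i)]

/-- Quantal response equilibrium with respect to a profile of QRFs `p`. -/
def IsQRE (u : ∀ i : N, (∀ j, A j) → ℝ) (p : ∀ i, (A i → ℝ) → (A i → ℝ))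
    (σ : ∀ i, A i → ℝ) : Prop :=
  ∀ i : N, σ i = p i (fun ai => devUtil u σ i ai)

/-- A sequence of profiles of QRFs is utility maximizing in the limit. -/
def UtilityMaximizingInLimit (u : ∀ i : N, (∀ j, A j) → ℝ)
    (p : ℕ → ∀ i, (A i → ℝ) → (A i → ℝ)) : Prop :=
  ∀ (s : ℕ → ∀ i, A i → ℝ) (σ : ∀ i, A i → ℝ),
    (∀ n, IsQRE u (p n) (s n)) → ConvergesTo s σ → IsNash u σ

/-- `σ` is approachable by regular QRE that are utility maximizing in the limit. -/
def ApproachableByRegularQRE (u : ∀ i : N, (∀ j, A j) → ℝ) (σ : ∀ i, A i → ℝ) : Prop :=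
  ∃ p : ℕ → ∀ i, (A i → ℝ) → (A i → ℝ),
    (∀ n i, IsRegularQRF (p n i)) ∧ UtilityMaximizingInLimit u p ∧
    ∃ s : ℕ → ∀ i, A i → ℝ, (∀ n, IsQRE u (p n) (s n)) ∧ ConvergesTo s σ

end QREDefs

/-- A control cost function (van Damme), bundled with its derivative on `(0,1]`. -/
structure ControlCost where
  f : ℝ → ℝ
  f' : ℝ → ℝ
  hasDeriv : ∀ x ∈ Set.Ioc (0:ℝ) 1, HasDerivWithinAt f (f' x) (Set.Ioc (0:ℝ) 1) x
  contDeriv : ContinuousOn f' (Set.Ioc (0:ℝ) 1)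
  anti : StrictAntiOn f (Set.Ioc (0:ℝ) 1)
  convex : StrictConvexOn ℝ (Set.Ioc (0:ℝ) 1) f
  atOne : f 1 = 0
  blowup : Tendsto f (nhdsWithin 0 (Set.Ioi (0:ℝ))) atTop

/-- The game Γ₂ᶜ (Table 2). Player `0` is player 1 (actions `0 = a1`, `1 = a2`,
`2 = a3`); player `1` is player 2 (actions `0 = b1`, `1 = b2`, `2 = b3`). -/
noncomputable def uGammaC (c1 c2 : ℝ) : ∀ _ : Fin 2, (Fin 2 → Fin 3) → ℝ := fun i a =>
  if i = 0 then
    ![![(1:ℝ), 0, -7 - c1], ![0, 0, -7], ![-7 - c1, -7, -7]] (a 0) (a 1)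
  else
    ![![(1:ℝ), 0, -7 - c2], ![0, 0, -7], ![-7 - c2, -7, -7]] (a 0) (a 1)


lemma vec_cons_eq (x y : Fin 3) :
    (Fin.cons x (Fin.cons y finZeroElim) : Fin 2 → Fin 3) = ![x, y] := by
  funext j; fin_cases j <;> rfl

lemma devUtil_fin2_0 (u : ∀ i : Fin 2, (Fin 2 → Fin 3) → ℝ) (σ : ∀ _ : Fin 2, Fin 3 → ℝ)
    (ai : Fin 3) : devUtil u σ 0 ai = ∑ y : Fin 3, u 0 ![ai, y] * σ 1 y := by
  unfold devUtil expUtil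
  rw [← (piFinTwoEquiv (fun _ => Fin 3)).symm.sum_comp, Fintype.sum_prod_type]
  simp only [Fin.prod_univ_two, piFinTwoEquiv, Equiv.coe_fn_symm_mk,
    Function.update_self, Function.update_of_ne (by decide : (1:Fin 2) ≠ 0), vec_cons_eq]
  rw [Fin.sum_univ_three, Fin.sum_univ_three]
  fin_cases ai <;> simp [Fin.sum_univ_three] <;> ring

lemma devUtil_fin2_1 (u : ∀ i : Fin 2, (Fin 2 → Fin 3) → ℝ) (σ : ∀ _ : Fin 2, Fin 3 → ℝ)
    (bi : Fin 3) : devUtil u σ 1 bi = ∑ x : Fin 3, u 1 ![x, bi] * σ 0 x := by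
  unfold devUtil expUtil
  rw [← (piFinTwoEquiv (fun _ => Fin 3)).symm.sum_comp, Fintype.sum_prod_type]
  simp only [Fin.prod_univ_two, piFinTwoEquiv, Equiv.coe_fn_symm_mk,
    Function.update_self, Function.update_of_ne (by decide : (0:Fin 2) ≠ 1), vec_cons_eq]
  rw [Fin.sum_univ_three, Fin.sum_univ_three]
  fin_cases bi <;> simp [Fin.sum_univ_three] <;> ring

variable {c1 c2 : ℝ} {σ : ∀ _ : Fin 2, Fin 3 → ℝ}

lemma gA0 : devUtil (uGammaC c1 c2) σ 0 0 = σ 1 0 + (-7 - c1) * σ 1 2 := by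
  rw [devUtil_fin2_0, Fin.sum_univ_three]; simp [uGammaC, Matrix.vecHead, Matrix.vecTail]
lemma gA1 : devUtil (uGammaC c1 c2) σ 0 1 = -7 * σ 1 2 := by
  rw [devUtil_fin2_0, Fin.sum_univ_three]; simp [uGammaC, Matrix.vecHead, Matrix.vecTail]
lemma gA2 : devUtil (uGammaC c1 c2) σ 0 2 = (-7 - c1) * σ 1 0 + (-7) * σ 1 1 + (-7) * σ 1 2 := by
  rw [devUtil_fin2_0, Fin.sum_univ_three]; simp [uGammaC, Matrix.vecHead, Matrix.vecTail]
lemma gB0 : devUtil (uGammaC c1 c2) σ 1 0 = σ 0 0 + (-7 - c2) * σ 0 2 := by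
  rw [devUtil_fin2_1, Fin.sum_univ_three]; simp [uGammaC, Matrix.vecHead, Matrix.vecTail]
lemma gB1 : devUtil (uGammaC c1 c2) σ 1 1 = -7 * σ 0 2 := by
  rw [devUtil_fin2_1, Fin.sum_univ_three]; simp [uGammaC, Matrix.vecHead, Matrix.vecTail]
lemma gB2 : devUtil (uGammaC c1 c2) σ 1 2 = (-7 - c2) * σ 0 0 + (-7) * σ 0 1 + (-7) * σ 0 2 := by
  rw [devUtil_fin2_1, Fin.sum_univ_three]; simp [uGammaC, Matrix.vecHead, Matrix.vecTail]

lemma gammaC_key (c1 c2 : ℝ) (hc1 : 0 < c1) (hc2 : 0 < c2) (τ : ∀ _ : Fin 2, Fin 3 → ℝ)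
    (hstrat : IsStrategy τ) (hint : Interior τ) (ε : ℝ) (hε0 : 0 < ε)
    (hεK : ε * (3*(c1+c2+3)) ≤ 1)
    (hprop : ∀ (i : Fin 2) (ai bi : Fin 3),
      devUtil (uGammaC c1 c2) τ i bi < devUtil (uGammaC c1 c2) τ i ai →
        τ i bi ≤ ε * τ i ai) :
    1 ≤ τ 0 0 * (1+2*ε) ∧ 1 ≤ τ 1 0 * (1+2*ε) := by
  have hε1 : 9*ε ≤ 1 := by linarith [mul_pos hε0 hc1, mul_pos hε0 hc2]
  have hc1ε : 3*(c1*ε) < 1 := by linarith [mul_pos hε0 hc2, hε0]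
  have hc2ε : 3*(c2*ε) < 1 := by linarith [mul_pos hε0 hc1, hε0]
  have hsx : τ 0 0 + τ 0 1 + τ 0 2 = 1 := by
    have := hstrat.2 0; rwa [Fin.sum_univ_three] at this
  have hsy : τ 1 0 + τ 1 1 + τ 1 2 = 1 := by
    have := hstrat.2 1; rwa [Fin.sum_univ_three] at this
  have px0 := hint 0 0; have px1 := hint 0 1; have px2 := hint 0 2
  have py0 := hint 1 0; have py1 := hint 1 1; have py2 := hint 1 2
  have hx2 : τ 0 2 ≤ ε * τ 0 1 := by
    apply hprop 0 1 2
    rw [gA1, gA2]; linarith [mul_pos hc1 py0]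
  have hy2 : τ 1 2 ≤ ε * τ 1 1 := by
    apply hprop 1 1 2
    rw [gB1, gB2]; linarith [mul_pos hc2 px0]
  have hx2ε : τ 0 2 ≤ ε := by
    have h1 : τ 0 1 ≤ 1 := by linarith
    have := mul_le_mul_of_nonneg_left h1 hε0.le
    linarith
  have hy2ε : τ 1 2 ≤ ε := by
    have h1 : τ 1 1 ≤ 1 := by linarith
    have := mul_le_mul_of_nonneg_left h1 hε0.le
    linarith
  have L1 : c1 * τ 1 2 < τ 1 0 → 1 ≤ τ 0 0 * (1+2*ε) := by
    intro h
    have h01 : devUtil (uGammaC c1 c2) τ 0 1 < devUtil (uGammaC c1 c2) τ 0 0 := by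
      rw [gA0, gA1]; linarith
    have hx1 : τ 0 1 ≤ ε * τ 0 0 := hprop 0 0 1 h01
    have hx2' : τ 0 2 ≤ ε * τ 0 0 := by
      linarith [mul_le_mul_of_nonneg_left hx1 hε0.le,
        mul_nonneg (mul_nonneg hε0.le (by linarith : (0:ℝ) ≤ 1 - ε)) px0.le]
    linarith
  have L2 : c2 * τ 0 2 < τ 0 0 → 1 ≤ τ 1 0 * (1+2*ε) := by
    intro h
    have h01 : devUtil (uGammaC c1 c2) τ 1 1 < devUtil (uGammaC c1 c2) τ 1 0 := by
      rw [gB0, gB1]; linarith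
    have hy1 : τ 1 1 ≤ ε * τ 1 0 := hprop 1 0 1 h01
    have hy2' : τ 1 2 ≤ ε * τ 1 0 := by
      linarith [mul_le_mul_of_nonneg_left hy1 hε0.le,
        mul_nonneg (mul_nonneg hε0.le (by linarith : (0:ℝ) ≤ 1 - ε)) py0.le]
    linarith
  have B1 : 1 ≤ τ 0 0 * (1+2*ε) → c2 * τ 0 2 < τ 0 0 := by
    intro h
    have h3 : 1 ≤ τ 0 0 * 3 := by
      linarith [mul_nonneg (by linarith : (0:ℝ) ≤ 2-2*ε) px0.le]
    linarith [mul_le_mul_of_nonneg_left hx2ε hc2.le]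
  have B2 : 1 ≤ τ 1 0 * (1+2*ε) → c1 * τ 1 2 < τ 1 0 := by
    intro h
    have h3 : 1 ≤ τ 1 0 * 3 := by
      linarith [mul_nonneg (by linarith : (0:ℝ) ≤ 2-2*ε) py0.le]
    linarith [mul_le_mul_of_nonneg_left hy2ε hc1.le]
  have D : c2 * τ 0 2 < τ 0 0 ∨ c1 * τ 1 2 < τ 1 0 := by
    by_contra hcon
    push_neg at hcon
    obtain ⟨h1, h2⟩ := hcon
    have hx0 : τ 0 0 ≤ c2 * ε := le_trans h1 (mul_le_mul_of_nonneg_left hx2ε hc2.le)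
    have F3 : devUtil (uGammaC c1 c2) τ 1 2 < devUtil (uGammaC c1 c2) τ 1 0 := by
      rw [gB0, gB2]
      linarith [mul_pos hc2 px0, mul_le_mul_of_nonneg_left hx2ε hc2.le]
    have hy2' : τ 1 2 ≤ ε * τ 1 0 := hprop 1 0 2 F3
    linarith [mul_le_mul_of_nonneg_left h2 hε0.le,
      mul_lt_mul_of_pos_right (show c1*ε < 1/3 by linarith) py2]
  rcases D with h | h
  · have hy := L2 h
    exact ⟨L1 (B2 hy), hy⟩
  · have hx := L1 h
    exact ⟨hx, L2 (B1 hx)⟩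

set_option maxHeartbeats 1000000 in
lemma gammaC_seq (c1 c2 : ℝ) (hc1 : 0 < c1) (hc2 : 0 < c2) (e η : ℝ) (he0 : 0 < e)
    (he14 : e ≤ 1/4) (hc1e : c1 * e ≤ 1/4) (hc2e : c2 * e ≤ 1/4) (hη : 0 < η)
    (heη : 4 * e ≤ η) :
    IsStrategy (fun _ : Fin 2 => ![1-e-e^2, e, e^2]) ∧
    Interior (fun _ : Fin 2 => ![1-e-e^2, e, e^2]) ∧
    ∀ (i : Fin 2) (ai bi : Fin 3),
      devUtil (uGammaC c1 c2) (fun _ : Fin 2 => ![1-e-e^2, e, e^2]) i bi <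
        devUtil (uGammaC c1 c2) (fun _ : Fin 2 => ![1-e-e^2, e, e^2]) i ai →
      ![1-e-e^2, e, e^2] bi ≤ η * ![1-e-e^2, e, e^2] ai := by
  have he2 : e^2 ≤ e/4 := by nlinarith
  have hc1e2 : c1 * e^2 ≤ e/4 := by nlinarith
  have hc2e2 : c2 * e^2 ≤ e/4 := by nlinarith
  have hpos : 0 < 1 - e - e^2 := by nlinarith
  have hb01 : e ≤ η * (1-e-e^2) := by
    have hq := mul_le_mul_of_nonneg_left (show 1/4 ≤ 1-e-e^2 by nlinarith) hη.le
    linarith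
  have hb12 : e^2 ≤ η * e := by nlinarith [mul_le_mul_of_nonneg_right (show e ≤ η by linarith) he0.le]
  have hb02 : e^2 ≤ η * (1-e-e^2) := le_trans (by nlinarith) hb01
  refine ⟨⟨?_, ?_⟩, ?_, ?_⟩
  · intro i a; fin_cases a
    · show (0:ℝ) ≤ 1-e-e^2; linarith
    · show (0:ℝ) ≤ e; linarith
    · show (0:ℝ) ≤ e^2; positivity
  · intro i; rw [Fin.sum_univ_three]
    show (1-e-e^2) + e + e^2 = 1; ring
  · intro i a; fin_cases a
    · show (0:ℝ) < 1-e-e^2; linarith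
    · show (0:ℝ) < e; linarith
    · show (0:ℝ) < e^2; positivity
  · set u := uGammaC c1 c2
    set τ := (fun _ : Fin 2 => ![1-e-e^2, e, e^2]) with hτ
    have eA0 : devUtil u τ 0 0 = (1-e-e^2) + (-7-c1)*e^2 := by
      rw [gA0]; norm_num [hτ, Matrix.cons_val_two]
    have eA1 : devUtil u τ 0 1 = -7*e^2 := by
      rw [gA1]; norm_num [hτ, Matrix.cons_val_two]
    have eA2 : devUtil u τ 0 2 = (-7-c1)*(1-e-e^2) + (-7)*e + (-7)*e^2 := by
      rw [gA2]; norm_num [hτ, Matrix.cons_val_two]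
    have eB0 : devUtil u τ 1 0 = (1-e-e^2) + (-7-c2)*e^2 := by
      rw [gB0]; norm_num [hτ, Matrix.cons_val_two]
    have eB1 : devUtil u τ 1 1 = -7*e^2 := by
      rw [gB1]; norm_num [hτ, Matrix.cons_val_two]
    have eB2 : devUtil u τ 1 2 = (-7-c2)*(1-e-e^2) + (-7)*e + (-7)*e^2 := by
      rw [gB2]; norm_num [hτ, Matrix.cons_val_two]
    intro i ai bi
    fin_cases i <;> fin_cases ai <;> fin_cases bi
    · intro h; exact absurd h (lt_irrefl _)
    · show devUtil u τ 0 0 > devUtil u τ 0 1 → e ≤ η * (1-e-e^2)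
      intro _; exact hb01
    · show devUtil u τ 0 0 > devUtil u τ 0 2 → e^2 ≤ η * (1-e-e^2)
      intro _; exact hb02
    · show devUtil u τ 0 0 < devUtil u τ 0 1 → (1-e-e^2) ≤ η * e
      rw [eA0, eA1]; intro h; linarith
    · intro h; exact absurd h (lt_irrefl _)
    · show devUtil u τ 0 1 > devUtil u τ 0 2 → e^2 ≤ η * e
      intro _; exact hb12
    · show devUtil u τ 0 0 < devUtil u τ 0 2 → (1-e-e^2) ≤ η * e^2
      rw [eA0, eA2]; intro h; nlinarith [mul_pos hc1 hpos]
    · show devUtil u τ 0 1 < devUtil u τ 0 2 → e ≤ η * e^2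
      rw [eA1, eA2]; intro h; nlinarith [mul_pos hc1 hpos]
    · intro h; exact absurd h (lt_irrefl _)
    · intro h; exact absurd h (lt_irrefl _)
    · show devUtil u τ 1 0 > devUtil u τ 1 1 → e ≤ η * (1-e-e^2)
      intro _; exact hb01
    · show devUtil u τ 1 0 > devUtil u τ 1 2 → e^2 ≤ η * (1-e-e^2)
      intro _; exact hb02
    · show devUtil u τ 1 0 < devUtil u τ 1 1 → (1-e-e^2) ≤ η * e
      rw [eB0, eB1]; intro h; linarith
    · intro h; exact absurd h (lt_irrefl _)
    · show devUtil u τ 1 1 > devUtil u τ 1 2 → e^2 ≤ η * e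
      intro _; exact hb12
    · show devUtil u τ 1 0 < devUtil u τ 1 2 → (1-e-e^2) ≤ η * e^2
      rw [eB0, eB2]; intro h; nlinarith [mul_pos hc2 hpos]
    · show devUtil u τ 1 1 < devUtil u τ 1 2 → e ≤ η * e^2
      rw [eB1, eB2]; intro h; nlinarith [mul_pos hc2 hpos]
    · intro h; exact absurd h (lt_irrefl _)

set_option maxHeartbeats 1000000 in
/-- for every c1, c2 > 0, the unique proper equilibrium of Γ₂ᶜ is the
pure profile (a1,b1). -/
theorem gammaC_proper_set (c1 c2 : ℝ) (hc1 : 0 < c1) (hc2 : 0 < c2)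
    (σ : ∀ _ : Fin 2, Fin 3 → ℝ) (hσ : IsStrategy σ) :
    IsProper (uGammaC c1 c2) σ ↔ (σ 0 0 = 1 ∧ σ 1 0 = 1) := by
  have hsx : σ 0 0 + σ 0 1 + σ 0 2 = 1 := by
    have := hσ.2 0; rwa [Fin.sum_univ_three] at this
  have hsy : σ 1 0 + σ 1 1 + σ 1 2 = 1 := by
    have := hσ.2 1; rwa [Fin.sum_univ_three] at this
  constructor
  · rintro ⟨hstrat, s, hs, hconv⟩
    have hbnd : ∀ n : ℕ, 3*(c1+c2+3) ≤ (n:ℝ)+1 →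
        1 ≤ s n 0 0 * (1+2*(1/((n:ℝ)+1))) ∧ 1 ≤ s n 1 0 * (1+2*(1/((n:ℝ)+1))) := by
      intro n hn
      have hn0 : (0:ℝ) < (n:ℝ)+1 := by positivity
      refine gammaC_key c1 c2 hc1 hc2 (s n) (hs n).1 (hs n).2.1 _ (by positivity) ?_ ?_
      · rw [div_mul_eq_mul_div, one_mul, div_le_one hn0]; exact hn
      · exact (hs n).2.2
    have hev : ∀ᶠ n : ℕ in atTop, 3*(c1+c2+3) ≤ (n:ℝ)+1 := by
      filter_upwards [eventually_ge_atTop ⌈3*(c1+c2+3)⌉₊] with n hn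
      have h1 : (3*(c1+c2+3):ℝ) ≤ (⌈3*(c1+c2+3)⌉₊:ℝ) := Nat.le_ceil _
      have h2 : ((⌈3*(c1+c2+3)⌉₊:ℕ):ℝ) ≤ (n:ℝ) := Nat.cast_le.mpr hn
      linarith
    have hfac : Tendsto (fun n : ℕ => 1+2*(1/((n:ℝ)+1))) atTop (𝓝 1) := by
      have := (tendsto_const_nhds : Tendsto (fun _ : ℕ => (1:ℝ)) atTop (𝓝 1)).add
        (tendsto_one_div_add_atTop_nhds_zero_nat.const_mul 2)
      simpa using this
    have h00 : 1 ≤ σ 0 0 := by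
      have hT : Tendsto (fun n => s n 0 0 * (1+2*(1/((n:ℝ)+1)))) atTop (𝓝 (σ 0 0)) := by
        simpa using (hconv 0 0).mul hfac
      exact ge_of_tendsto hT (hev.mono fun n hn => (hbnd n hn).1)
    have h10 : 1 ≤ σ 1 0 := by
      have hT : Tendsto (fun n => s n 1 0 * (1+2*(1/((n:ℝ)+1)))) atTop (𝓝 (σ 1 0)) := by
        simpa using (hconv 1 0).mul hfac
      exact ge_of_tendsto hT (hev.mono fun n hn => (hbnd n hn).2)
    constructor <;>
      linarith [hσ.1 0 1, hσ.1 0 2, hσ.1 1 1, hσ.1 1 2]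
  · rintro ⟨h0, h1⟩
    have hx1 : σ 0 1 = 0 := by linarith [hσ.1 0 1, hσ.1 0 2]
    have hx2 : σ 0 2 = 0 := by linarith [hσ.1 0 1, hσ.1 0 2]
    have hy1 : σ 1 1 = 0 := by linarith [hσ.1 1 1, hσ.1 1 2]
    have hy2 : σ 1 2 = 0 := by linarith [hσ.1 1 1, hσ.1 1 2]
    refine ⟨hσ, ?_⟩
    set K : ℝ := 4*(1+c1+c2) with hKdef
    have hKpos : (0:ℝ) < K := by positivity
    have hK4 : (4:ℝ) ≤ K := by nlinarith
    set e : ℕ → ℝ := fun n => (1/((n:ℝ)+1)) * (1/K) with hedef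
    have he0 : ∀ n, 0 < e n := fun n => by
      have : (0:ℝ) < (n:ℝ)+1 := by positivity
      positivity
    have hinvK : (1:ℝ)/K ≤ 1/4 := by
      rw [div_le_div_iff₀ hKpos (by norm_num)]; linarith
    have hc1K : c1 * (1/K) ≤ 1/4 := by
      rw [mul_one_div, div_le_div_iff₀ hKpos (by norm_num)]; nlinarith
    have hc2K : c2 * (1/K) ≤ 1/4 := by
      rw [mul_one_div, div_le_div_iff₀ hKpos (by norm_num)]; nlinarith
    have h4K : 4 * ((1:ℝ)/K) ≤ 1 := by
      rw [mul_one_div, div_le_one hKpos]; linarith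
    have key : ∀ n : ℕ, IsStrategy (fun _ : Fin 2 => ![1-e n-(e n)^2, e n, (e n)^2]) ∧
        Interior (fun _ : Fin 2 => ![1-e n-(e n)^2, e n, (e n)^2]) ∧
        ∀ (i : Fin 2) (ai bi : Fin 3),
          devUtil (uGammaC c1 c2) (fun _ : Fin 2 => ![1-e n-(e n)^2, e n, (e n)^2]) i bi <
            devUtil (uGammaC c1 c2) (fun _ : Fin 2 => ![1-e n-(e n)^2, e n, (e n)^2]) i ai →
          ![1-e n-(e n)^2, e n, (e n)^2] bi ≤ (1/((n:ℝ)+1)) * ![1-e n-(e n)^2, e n, (e n)^2] ai := by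
      intro n
      have hn0 : (0:ℝ) < (n:ℝ)+1 := by positivity
      have ht0 : 0 < 1/((n:ℝ)+1) := by positivity
      have ht1 : 1/((n:ℝ)+1) ≤ 1 := by
        rw [div_le_one hn0]; linarith [Nat.cast_nonneg (α := ℝ) n]
      have hiK : (0:ℝ) < 1/K := by positivity
      apply gammaC_seq c1 c2 hc1 hc2 (e n) (1/((n:ℝ)+1)) (he0 n) ?_ ?_ ?_ ht0 ?_
      · calc e n ≤ 1 * (1/4) := by
              rw [hedef]
              exact mul_le_mul ht1 hinvK hiK.le (by norm_num)
          _ = 1/4 := by norm_num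
      · have h1 := mul_le_mul ht1 hc1K (by positivity) (by norm_num)
        rw [hedef]; nlinarith
      · have h1 := mul_le_mul ht1 hc2K (by positivity) (by norm_num)
        rw [hedef]; nlinarith
      · have h1 := mul_le_mul_of_nonneg_left h4K ht0.le
        rw [hedef]; nlinarith
    refine ⟨fun n (_ : Fin 2) => ![1-e n-(e n)^2, e n, (e n)^2],
      fun n => ⟨(key n).1, (key n).2.1, fun i ai bi h => (key n).2.2 i ai bi h⟩, ?_⟩
    have hE : Tendsto e atTop (𝓝 0) := by
      have := tendsto_one_div_add_atTop_nhds_zero_nat.mul_const (1/K)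
      simpa [hedef] using this
    have limA : Tendsto (fun n => 1 - e n - (e n)^2) atTop (𝓝 1) := by
      have := (tendsto_const_nhds (x := (1:ℝ)) (f := atTop)).sub hE |>.sub (hE.pow 2)
      simpa using this
    have limC : Tendsto (fun n => (e n)^2) atTop (𝓝 0) := by
      have := hE.pow 2
      simpa using this
    intro i ai
    fin_cases i <;> fin_cases ai
    · show Tendsto (fun n => 1 - e n - (e n)^2) atTop (𝓝 (σ 0 0)); rw [h0]; exact limA
    · show Tendsto (fun n => e n) atTop (𝓝 (σ 0 1)); rw [hx1]; exact hE
    · show Tendsto (fun n => (e n)^2) atTop (𝓝 (σ 0 2)); rw [hx2]; exact limC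
    · show Tendsto (fun n => 1 - e n - (e n)^2) atTop (𝓝 (σ 1 0)); rw [h1]; exact limA
    · show Tendsto (fun n => e n) atTop (𝓝 (σ 1 1)); rw [hy1]; exact hE
    · show Tendsto (fun n => (e n)^2) atTop (𝓝 (σ 1 2)); rw [hy2]; exact limC
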